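/- arXiv:2406.01531 — 2 statements merged into one kernel-verified Lean document; each statement's English description precedes it below -/
import Mathlib

section
/- (Case 8) Let u₀ ∈ ℝ³, u₀ ≠ 0, and δ₀ ∈ ℝ, δ₀ ≠ 0. If (q¹,q²,p¹,p²) satisfies J(q¹,q²,p¹,p²) = (δ₀u₀, u₀), then N := p¹×p² ≠ 0 (so in particular SE(3)_{(q,p)} is trivial and J⁻¹(δ₀u₀,u₀) ∩ M_{G⁴} = J⁻¹(δ₀u₀,u₀)), and moreover |N|² = |p¹|²|u₀|² − ⟨p¹,u₀⟩², ⟨q¹, N⟩ = δ₀(|u₀|² − ⟨p¹,u₀⟩), and ⟨q², N⟩ = −δ₀⟨p¹,u₀⟩. Furthermore J⁻¹(δ₀u₀,u₀) is path-connected. -/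
open Matrix

/-- Vectors in ℝ³. -/
abbrev V3 : Type := Fin 3 → ℝ

/-- The two-body phase space M = ℝ³ × ℝ³ × ℝ³ × ℝ³, points (q¹, q², p¹, p²). -/
abbrev M2B : Type := V3 × V3 × V3 × V3

/-- A 3×3 real matrix is special orthogonal. -/
def SO3 (A : Matrix (Fin 3) (Fin 3) ℝ) : Prop := Aᵀ * A = 1 ∧ A.det = 1

/-- The action of (A, a) ∈ SE(3) on the phase space:
(A,a)·(q¹,q²,p¹,p²) = (Aq¹+a, Aq²+a, Ap¹, Ap²). -/
def act (A : Matrix (Fin 3) (Fin 3) ℝ) (a : V3) (m : M2B) : M2B :=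
  (A *ᵥ m.1 + a, A *ᵥ m.2.1 + a, A *ᵥ m.2.2.1, A *ᵥ m.2.2.2)

/-- The isotropy subgroup SE(3)_{(q,p)} of a point of M, as a set of pairs (A,a)
with A special orthogonal. -/
def isotropy (m : M2B) : Set (Matrix (Fin 3) (Fin 3) ℝ × V3) :=
  {g | SO3 g.1 ∧ act g.1 g.2 m = m}

/-- The momentum map J(q¹,q²,p¹,p²) = (q¹×p¹ + q²×p², p¹+p²). -/
def Jmom (m : M2B) : V3 × V3 :=
  (m.1 ⨯₃ m.2.2.1 + m.2.1 ⨯₃ m.2.2.2, m.2.2.1 + m.2.2.2)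

/-- G¹(x) = {(A,a) ∈ SE(3) : a = x − Ax}. -/
def G1 (x : V3) : Set (Matrix (Fin 3) (Fin 3) ℝ × V3) :=
  {g | SO3 g.1 ∧ g.2 = x - g.1 *ᵥ x}

/-- G²(y) = {(A,0) ∈ SE(3) : Ay = y}. -/
def G2 (y : V3) : Set (Matrix (Fin 3) (Fin 3) ℝ × V3) :=
  {g | SO3 g.1 ∧ g.1 *ᵥ y = y ∧ g.2 = 0}

/-- G³(x,y) = {(A,a) ∈ SE(3) : Ay = y and a = x − Ax}. -/
def G3 (x y : V3) : Set (Matrix (Fin 3) (Fin 3) ℝ × V3) :=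
  {g | SO3 g.1 ∧ g.1 *ᵥ y = y ∧ g.2 = x - g.1 *ᵥ x}

/-- G⁴ = {(I, 0)}, the trivial subgroup. -/
def G4 : Set (Matrix (Fin 3) (Fin 3) ℝ × V3) := {((1 : Matrix (Fin 3) (Fin 3) ℝ), (0 : V3))}

/-! ### Auxiliary lemmas -/

lemma cross_sub_self' (p u : V3) : p ⨯₃ (u - p) = p ⨯₃ u := by
  rw [map_sub, cross_self, sub_zero]

/-- decomposition of a vector in the basis `a`, `b`, `a ⨯₃ b`. -/
lemma cross_decomp (a b v : V3) :
    (a ⬝ᵥ (b ⨯₃ (a ⨯₃ b))) • v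
      = (v ⬝ᵥ (b ⨯₃ (a ⨯₃ b))) • a + (v ⬝ᵥ ((a ⨯₃ b) ⨯₃ a)) • b + (v ⬝ᵥ (a ⨯₃ b)) • (a ⨯₃ b) := by
  funext i; fin_cases i <;>
    simp [cross_apply, dotProduct, Fin.sum_univ_three] <;> ring

/-- a special orthogonal matrix is equivariant for the cross product. -/
lemma so3_cross {A : Matrix (Fin 3) (Fin 3) ℝ} (h : SO3 A) (x y : V3) :
    A *ᵥ (x ⨯₃ y) = (A *ᵥ x) ⨯₃ (A *ᵥ y) := by
  obtain ⟨ho, hdet⟩ := h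
  have hadj : A.adjugate = Aᵀ := by
    calc A.adjugate = (Aᵀ * A) * A.adjugate := by rw [ho, one_mul]
    _ = Aᵀ * (A * A.adjugate) := by rw [Matrix.mul_assoc]
    _ = Aᵀ := by rw [Matrix.mul_adjugate, hdet, one_smul, mul_one]
  rw [Matrix.adjugate_fin_three, ← Matrix.ext_iff] at hadj
  have e00 := hadj 0 0; have e01 := hadj 1 0; have e02 := hadj 2 0
  have e10 := hadj 0 1; have e11 := hadj 1 1; have e12 := hadj 2 1
  have e20 := hadj 0 2; have e21 := hadj 1 2; have e22 := hadj 2 2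
  simp only [Matrix.cons_val', Matrix.cons_val_zero, Matrix.cons_val_one, Matrix.head_cons,
    Matrix.empty_val', Matrix.cons_val_fin_one, Matrix.head_fin_const, Matrix.cons_val_two,
    Matrix.tail_cons, Matrix.transpose_apply, Matrix.of_apply] at e00 e01 e02 e10 e11 e12 e20 e21 e22
  funext i; fin_cases i <;>
    simp only [cross_apply, Matrix.mulVec, dotProduct, Fin.sum_univ_three, Fin.zero_eta,
      Fin.mk_one, Fin.reduceFinMk, Matrix.cons_val_zero,
      Matrix.cons_val_one, Matrix.head_cons, Matrix.cons_val_two, Matrix.tail_cons, Fin.isValue]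
  · linear_combination (-(x 1 * y 2 - x 2 * y 1)) * e00 - (x 2 * y 0 - x 0 * y 2) * e01
      - (x 0 * y 1 - x 1 * y 0) * e02
  · linear_combination (-(x 1 * y 2 - x 2 * y 1)) * e10 - (x 2 * y 0 - x 0 * y 2) * e11
      - (x 0 * y 1 - x 1 * y 0) * e12
  · linear_combination (-(x 1 * y 2 - x 2 * y 1)) * e20 - (x 2 * y 0 - x 0 * y 2) * e21
      - (x 0 * y 1 - x 1 * y 0) * e22

/-- triviality of the isotropy group when the two momenta are independent. -/
lemma isotropy_eq_G4 (u0 q1 q2 p1 : V3) (hN : p1 ⨯₃ (u0 - p1) ≠ 0) :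
    isotropy (q1, q2, p1, u0 - p1) = G4 := by
  have hN' : p1 ⨯₃ u0 ≠ 0 := by rwa [cross_sub_self'] at hN
  ext ⟨A, a⟩
  simp only [isotropy, G4, Set.mem_setOf_eq, Set.mem_singleton_iff, act, Prod.mk.injEq]
  constructor
  · rintro ⟨hSO, h1, h2, h3, h4⟩
    have hu0 : A *ᵥ u0 = u0 := by
      have h4' := h4
      rw [Matrix.mulVec_sub, h3, sub_left_inj] at h4'
      exact h4'
    have hNfix : A *ᵥ (p1 ⨯₃ u0) = p1 ⨯₃ u0 := by rw [so3_cross hSO, h3, hu0]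
    set B : Matrix (Fin 3) (Fin 3) ℝ := (![p1, u0, p1 ⨯₃ u0] : Matrix (Fin 3) (Fin 3) ℝ)ᵀ with hB
    have hAB : A * B = B := by
      ext i j
      fin_cases j
      · simpa [hB, Matrix.mul_apply, Matrix.mulVec, dotProduct, Fin.sum_univ_three, Matrix.transpose, Matrix.of_apply]
          using congrFun h3 i
      · simpa [hB, Matrix.mul_apply, Matrix.mulVec, dotProduct, Fin.sum_univ_three, Matrix.transpose, Matrix.of_apply]
          using congrFun hu0 i
      · simpa [hB, Matrix.mul_apply, Matrix.mulVec, dotProduct, Fin.sum_univ_three, Matrix.transpose, Matrix.of_apply]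
          using congrFun hNfix i
    have hdetB : IsUnit B.det := by
      have hd : B.det = (p1 ⨯₃ u0) ⬝ᵥ (p1 ⨯₃ u0) := by
        rw [hB, show (![p1, u0, p1 ⨯₃ u0] : Matrix (Fin 3) (Fin 3) ℝ)ᵀ.det = Matrix.det ![p1, u0, p1 ⨯₃ u0] from Matrix.det_transpose _, ← triple_product_eq_det]
        simp only [cross_apply, dotProduct, Fin.sum_univ_three, Matrix.cons_val_zero,
          Matrix.cons_val_one, Matrix.head_cons, Matrix.cons_val_two, Matrix.tail_cons]
        ring
      rw [hd]
      exact (dotProduct_self_eq_zero.ne.mpr hN').isUnit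
    have hA1 : A = 1 := by
      calc A = A * (B * B⁻¹) := by rw [Matrix.mul_nonsing_inv B hdetB, mul_one]
      _ = (A * B) * B⁻¹ := by rw [Matrix.mul_assoc]
      _ = B * B⁻¹ := by rw [hAB]
      _ = 1 := Matrix.mul_nonsing_inv B hdetB
    refine ⟨hA1, ?_⟩
    rw [hA1, Matrix.one_mulVec] at h1
    exact add_left_cancel (h1.trans (add_zero q1).symm)
  · rintro ⟨rfl, rfl⟩
    refine ⟨⟨by simp, by simp⟩, by simp [Matrix.one_mulVec], by simp [Matrix.one_mulVec],
      Matrix.one_mulVec _, Matrix.one_mulVec _⟩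

/-- the set of vectors not parallel to a fixed nonzero vector is path-connected. -/
lemma pc_not_parallel (u0 : V3) (hu : u0 ≠ 0) : IsPathConnected {p : V3 | p ⨯₃ u0 ≠ 0} := by
  have hset : {p : V3 | p ⨯₃ u0 ≠ 0} = (↑(Submodule.span ℝ {u0}) : Set V3)ᶜ := by
    ext p
    simp only [Set.mem_setOf_eq, Set.mem_compl_iff, SetLike.mem_coe,
      Submodule.mem_span_singleton]
    rw [crossProduct_ne_zero_iff_linearIndependent, linearIndependent_fin2]
    simp only [Matrix.cons_val_one, Matrix.head_cons, Matrix.cons_val_zero]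
    constructor
    · rintro ⟨-, h⟩ ⟨a, ha⟩; exact h a ha
    · intro h; exact ⟨hu, fun a ha => h ⟨a, ha⟩⟩
  rw [hset]
  apply isPathConnected_compl_of_one_lt_codim
  have h3 : Module.finrank ℝ V3 = 3 := by simp
  have h1 : Module.finrank ℝ (Submodule.span ℝ {u0}) = 1 := finrank_span_singleton hu
  have hq := Submodule.finrank_quotient_add_finrank (Submodule.span ℝ {u0})
  rw [h3, h1] at hq
  have h2 : Module.finrank ℝ (V3 ⧸ Submodule.span ℝ {u0}) = 2 := by omega
  rw [← Module.finrank_eq_rank, h2]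
  exact_mod_cast one_lt_two

/-- products of path-connected sets are path-connected. -/
lemma pc_prod {X Y : Type*} [TopologicalSpace X] [TopologicalSpace Y]
    {s : Set X} {t : Set Y} (hs : IsPathConnected s) (ht : IsPathConnected t) :
    IsPathConnected (s ×ˢ t) := by
  obtain ⟨x, hx, hxj⟩ := hs
  obtain ⟨y, hy, hyj⟩ := ht
  refine ⟨(x, y), ⟨hx, hy⟩, ?_⟩
  rintro ⟨x', y'⟩ ⟨hx', hy'⟩
  obtain ⟨γ1, hγ1⟩ := hxj hx'
  obtain ⟨γ2, hγ2⟩ := hyj hy'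
  exact ⟨γ1.prod γ2, fun τ => ⟨hγ1 τ, hγ2 τ⟩⟩

/-- recovering a point of the level set from the explicit parametrization. -/
lemma recover_pt (u0 : V3) (d0 : ℝ) (q1 q2 p1 : V3)
    (h1 : q1 ⨯₃ p1 + q2 ⨯₃ (u0 - p1) = d0 • u0)
    (hW : (p1 ⨯₃ u0) ⬝ᵥ (p1 ⨯₃ u0) ≠ 0)
    (hq1N : q1 ⬝ᵥ (p1 ⨯₃ (u0 - p1)) = d0 * (u0 ⬝ᵥ u0 - p1 ⬝ᵥ u0))
    (hq2N : q2 ⬝ᵥ (p1 ⨯₃ (u0 - p1)) = -(d0 * (p1 ⬝ᵥ u0))) :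
    (d0 * (u0 ⬝ᵥ u0 - p1 ⬝ᵥ u0) / ((p1 ⨯₃ u0) ⬝ᵥ (p1 ⨯₃ u0))) • (p1 ⨯₃ u0)
      + (q1 ⬝ᵥ ((u0 - p1) ⨯₃ (p1 ⨯₃ u0)) / ((p1 ⨯₃ u0) ⬝ᵥ (p1 ⨯₃ u0))) • p1
      + (q1 ⬝ᵥ ((p1 ⨯₃ u0) ⨯₃ p1) / ((p1 ⨯₃ u0) ⬝ᵥ (p1 ⨯₃ u0))) • (u0 - p1) = q1 ∧
    (-(d0 * (p1 ⬝ᵥ u0)) / ((p1 ⨯₃ u0) ⬝ᵥ (p1 ⨯₃ u0))) • (p1 ⨯₃ u0)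
      + (q2 ⬝ᵥ ((p1 ⨯₃ u0) ⨯₃ p1) / ((p1 ⨯₃ u0) ⬝ᵥ (p1 ⨯₃ u0))) • (u0 - p1)
      + (q1 ⬝ᵥ ((p1 ⨯₃ u0) ⨯₃ p1) / ((p1 ⨯₃ u0) ⬝ᵥ (p1 ⨯₃ u0))) • p1 = q2 := by
  set W : ℝ := (p1 ⨯₃ u0) ⬝ᵥ (p1 ⨯₃ u0) with hWdef
  have hcan : ∀ x : ℝ, W * (x / W) = x := fun x => by field_simp
  have hD : p1 ⬝ᵥ ((u0 - p1) ⨯₃ (p1 ⨯₃ u0)) = W := by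
    simp only [hWdef, cross_apply, dotProduct, Fin.sum_univ_three, Pi.sub_apply,
      Matrix.cons_val_zero, Matrix.cons_val_one, Matrix.head_cons, Matrix.cons_val_two,
      Matrix.tail_cons]
    ring
  rw [cross_sub_self'] at hq1N hq2N
  have hcc : q2 ⬝ᵥ ((u0 - p1) ⨯₃ (p1 ⨯₃ u0)) = q1 ⬝ᵥ ((p1 ⨯₃ u0) ⨯₃ p1) := by
    have E0 := congrFun h1 0
    have E1 := congrFun h1 1
    have E2 := congrFun h1 2
    simp only [cross_apply, Pi.add_apply, Pi.sub_apply, Pi.smul_apply, smul_eq_mul,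
      Matrix.cons_val_zero, Matrix.cons_val_one, Matrix.head_cons, Matrix.cons_val_two,
      Matrix.tail_cons] at E0 E1 E2
    simp only [cross_apply, dotProduct, Fin.sum_univ_three, Pi.sub_apply, Matrix.cons_val_zero,
      Matrix.cons_val_one, Matrix.head_cons, Matrix.cons_val_two, Matrix.tail_cons]
    linear_combination (p1 1 * u0 2 - p1 2 * u0 1) * E0 + (p1 2 * u0 0 - p1 0 * u0 2) * E1
      + (p1 0 * u0 1 - p1 1 * u0 0) * E2
  have hd1 := cross_decomp p1 (u0 - p1) q1
  have hd2 := cross_decomp p1 (u0 - p1) q2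
  rw [cross_sub_self', hD, hq1N] at hd1
  rw [cross_sub_self', hD, hq2N, hcc] at hd2
  constructor
  · apply smul_right_injective V3 hW
    show W • _ = W • q1
    rw [smul_add, smul_add, smul_smul, smul_smul, smul_smul, hcan, hcan, hcan, hd1]
    abel
  · apply smul_right_injective V3 hW
    show W • _ = W • q2
    rw [smul_add, smul_add, smul_smul, smul_smul, smul_smul, hcan, hcan, hcan, hd2]
    abel

/-- Case 8: on J⁻¹(δ₀u₀, u₀) one has N = p¹×p² ≠ 0, trivial isotropy,
the stated identities for |N|², ⟨q¹,N⟩, ⟨q²,N⟩, and the level set is path-connected. -/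
theorem stmt17 (u0 : V3) (hu : u0 ≠ 0) (d0 : ℝ) (hd : d0 ≠ 0) :
    (∀ q1 q2 p1 p2 : V3, Jmom (q1, q2, p1, p2) = (d0 • u0, u0) →
      (p1 ⨯₃ p2 ≠ 0 ∧
       isotropy (q1, q2, p1, p2) = G4 ∧
       (p1 ⨯₃ p2) ⬝ᵥ (p1 ⨯₃ p2) = (p1 ⬝ᵥ p1) * (u0 ⬝ᵥ u0) - (p1 ⬝ᵥ u0) ^ 2 ∧
       q1 ⬝ᵥ (p1 ⨯₃ p2) = d0 * (u0 ⬝ᵥ u0 - p1 ⬝ᵥ u0) ∧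
       q2 ⬝ᵥ (p1 ⨯₃ p2) = -(d0 * (p1 ⬝ᵥ u0)))) ∧
    {m : M2B | Jmom m = (d0 • u0, u0) ∧ isotropy m = G4} =
      {m : M2B | Jmom m = (d0 • u0, u0)} ∧
    IsPathConnected {m : M2B | Jmom m = (d0 • u0, u0)} := by
  have hu2 : u0 ⬝ᵥ u0 ≠ 0 := fun h => hu (dotProduct_self_eq_zero.mp h)
  have main : ∀ q1 q2 p1 p2 : V3, Jmom (q1, q2, p1, p2) = (d0 • u0, u0) →
      (p1 ⨯₃ p2 ≠ 0 ∧
       isotropy (q1, q2, p1, p2) = G4 ∧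
       (p1 ⨯₃ p2) ⬝ᵥ (p1 ⨯₃ p2) = (p1 ⬝ᵥ p1) * (u0 ⬝ᵥ u0) - (p1 ⬝ᵥ u0) ^ 2 ∧
       q1 ⬝ᵥ (p1 ⨯₃ p2) = d0 * (u0 ⬝ᵥ u0 - p1 ⬝ᵥ u0) ∧
       q2 ⬝ᵥ (p1 ⨯₃ p2) = -(d0 * (p1 ⬝ᵥ u0))) := by
    intro q1 q2 p1 p2 hJ
    simp only [Jmom, Prod.mk.injEq] at hJ
    obtain ⟨h1, h2⟩ := hJ
    have hp2 : p2 = u0 - p1 := eq_sub_of_add_eq' h2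
    subst hp2
    have E0 := congrFun h1 0
    have E1 := congrFun h1 1
    have E2 := congrFun h1 2
    simp only [cross_apply, Pi.add_apply, Pi.sub_apply, Pi.smul_apply, smul_eq_mul,
      Matrix.cons_val_zero, Matrix.cons_val_one, Matrix.head_cons, Matrix.cons_val_two,
      Matrix.tail_cons] at E0 E1 E2
    have hN : p1 ⨯₃ (u0 - p1) ≠ 0 := by
      intro h
      have F0 := congrFun h 0
      have F1 := congrFun h 1
      have F2 := congrFun h 2
      simp only [cross_apply, Pi.sub_apply, Pi.zero_apply, Matrix.cons_val_zero,
        Matrix.cons_val_one, Matrix.head_cons, Matrix.cons_val_two, Matrix.tail_cons] at F0 F1 F2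
      refine absurd ?_ (mul_ne_zero hd hu2)
      simp only [dotProduct, Fin.sum_univ_three]
      linear_combination (q1 0 - q2 0) * F0 + (q1 1 - q2 1) * F1 + (q1 2 - q2 2) * F2
        - u0 0 * E0 - u0 1 * E1 - u0 2 * E2
    refine ⟨hN, isotropy_eq_G4 u0 q1 q2 p1 hN, ?_, ?_, ?_⟩
    · simp only [cross_apply, dotProduct, Fin.sum_univ_three, Pi.sub_apply, Matrix.cons_val_zero,
        Matrix.cons_val_one, Matrix.head_cons, Matrix.cons_val_two, Matrix.tail_cons]
      ring
    · simp only [cross_apply, dotProduct, Fin.sum_univ_three, Pi.sub_apply, Matrix.cons_val_zero,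
        Matrix.cons_val_one, Matrix.head_cons, Matrix.cons_val_two, Matrix.tail_cons]
      linear_combination (u0 0 - p1 0) * E0 + (u0 1 - p1 1) * E1 + (u0 2 - p1 2) * E2
    · simp only [cross_apply, dotProduct, Fin.sum_univ_three, Pi.sub_apply, Matrix.cons_val_zero,
        Matrix.cons_val_one, Matrix.head_cons, Matrix.cons_val_two, Matrix.tail_cons]
      linear_combination (- p1 0) * E0 + (- p1 1) * E1 + (- p1 2) * E2
  refine ⟨main, ?_, ?_⟩
  · ext m
    constructor
    · exact fun hm => hm.1
    · intro hm
      obtain ⟨q1, q2, p1, p2⟩ := m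
      exact ⟨hm, (main _ _ _ _ hm).2.1⟩
  · -- path connectedness
    set U : Set V3 := {p : V3 | p ⨯₃ u0 ≠ 0} with hU
    set Φ : V3 × V3 → M2B := fun z =>
      ((d0 * (u0 ⬝ᵥ u0 - z.1 ⬝ᵥ u0) / ((z.1 ⨯₃ u0) ⬝ᵥ (z.1 ⨯₃ u0))) • (z.1 ⨯₃ u0)
          + z.2 0 • z.1 + z.2 2 • (u0 - z.1),
        (-(d0 * (z.1 ⬝ᵥ u0)) / ((z.1 ⨯₃ u0) ⬝ᵥ (z.1 ⨯₃ u0))) • (z.1 ⨯₃ u0)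
          + z.2 1 • (u0 - z.1) + z.2 2 • z.1,
        z.1, u0 - z.1) with hΦ
    have hwne : ∀ z : V3 × V3, z ∈ U ×ˢ (Set.univ : Set V3) →
        (z.1 ⨯₃ u0) ⬝ᵥ (z.1 ⨯₃ u0) ≠ 0 :=
      fun z hz h => hz.1 (dotProduct_self_eq_zero.mp h)
    have hcont : ContinuousOn Φ (U ×ˢ (Set.univ : Set V3)) := by
      have contcross : Continuous (fun p : V3 => p ⨯₃ u0) := by
        simp only [cross_apply]
        refine continuous_pi fun i => ?_
        fin_cases i <;> simp <;> fun_prop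
      have contdot : Continuous (fun p : V3 => p ⬝ᵥ u0) := by
        simp only [dotProduct]
        exact continuous_finset_sum _ fun i _ => (continuous_apply i).mul continuous_const
      have contw : Continuous (fun p : V3 => (p ⨯₃ u0) ⬝ᵥ (p ⨯₃ u0)) := by
        simp only [dotProduct]
        exact continuous_finset_sum _ fun i _ =>
          ((continuous_apply i).comp contcross).mul ((continuous_apply i).comp contcross)
      have cfst : Continuous (fun z : V3 × V3 => z.1) := continuous_fst
      refine ContinuousOn.prodMk ?_ (ContinuousOn.prodMk ?_ (ContinuousOn.prodMk
        cfst.continuousOn (continuous_const.sub cfst).continuousOn))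
      · refine ContinuousOn.add (ContinuousOn.add ?_ ?_) ?_
        · exact ContinuousOn.smul
            ((continuous_const.mul (continuous_const.sub (contdot.comp cfst))).continuousOn.div
              ((contw.comp cfst)).continuousOn hwne)
            (contcross.comp cfst).continuousOn
        · exact (((continuous_apply 0).comp continuous_snd).smul cfst).continuousOn
        · exact (((continuous_apply 2).comp continuous_snd).smul
            (continuous_const.sub cfst)).continuousOn
      · refine ContinuousOn.add (ContinuousOn.add ?_ ?_) ?_
        · exact ContinuousOn.smul
            (((continuous_const.mul (contdot.comp cfst)).neg).continuousOn.div
              ((contw.comp cfst)).continuousOn hwne)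
            (contcross.comp cfst).continuousOn
        · exact (((continuous_apply 1).comp continuous_snd).smul
            (continuous_const.sub cfst)).continuousOn
        · exact (((continuous_apply 2).comp continuous_snd).smul cfst).continuousOn
    have himg : Φ '' (U ×ˢ (Set.univ : Set V3)) = {m : M2B | Jmom m = (d0 • u0, u0)} := by
      apply Set.Subset.antisymm
      · rintro - ⟨⟨p, r⟩, ⟨hp, -⟩, rfl⟩
        have hWp : (p ⨯₃ u0) ⬝ᵥ (p ⨯₃ u0) ≠ 0 := fun h => hp (dotProduct_self_eq_zero.mp h)
        have hWp' := hWp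
        simp only [cross_apply, dotProduct, Fin.sum_univ_three, Matrix.cons_val_zero,
          Matrix.cons_val_one, Matrix.head_cons, Matrix.cons_val_two,
          Matrix.tail_cons] at hWp'
        show Jmom _ = _
        refine Prod.ext ?_ (by simp [Jmom, hΦ])
        show _ ⨯₃ _ + _ ⨯₃ _ = d0 • u0
        funext i; fin_cases i <;>
          simp only [hΦ, cross_apply, dotProduct, Fin.sum_univ_three, Pi.add_apply, Pi.sub_apply,
            Pi.smul_apply, smul_eq_mul, Fin.zero_eta, Fin.mk_one, Fin.reduceFinMk,
            Matrix.cons_val_zero, Matrix.cons_val_one, Matrix.head_cons, Matrix.cons_val_two,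
            Matrix.tail_cons] <;>
          [linear_combination (d0 * u0 0) * mul_inv_cancel₀ hWp';
           linear_combination (d0 * u0 1) * mul_inv_cancel₀ hWp';
           linear_combination (d0 * u0 2) * mul_inv_cancel₀ hWp']
      · intro m hm
        obtain ⟨q1, q2, p1, p2⟩ := m
        obtain ⟨hN, -, -, hq1N, hq2N⟩ := main q1 q2 p1 p2 hm
        simp only [Jmom, Prod.mk.injEq] at hm
        obtain ⟨h1, h2⟩ := hm
        have hp2 : p2 = u0 - p1 := eq_sub_of_add_eq' h2
        subst hp2
        have hN' : p1 ⨯₃ u0 ≠ 0 := by rwa [cross_sub_self'] at hN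
        have hW : (p1 ⨯₃ u0) ⬝ᵥ (p1 ⨯₃ u0) ≠ 0 := fun h => hN' (dotProduct_self_eq_zero.mp h)
        obtain ⟨hr1, hr2⟩ := recover_pt u0 d0 q1 q2 p1 h1 hW hq1N hq2N
        refine ⟨(p1, ![q1 ⬝ᵥ ((u0 - p1) ⨯₃ (p1 ⨯₃ u0)) / ((p1 ⨯₃ u0) ⬝ᵥ (p1 ⨯₃ u0)),
            q2 ⬝ᵥ ((p1 ⨯₃ u0) ⨯₃ p1) / ((p1 ⨯₃ u0) ⬝ᵥ (p1 ⨯₃ u0)),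
            q1 ⬝ᵥ ((p1 ⨯₃ u0) ⨯₃ p1) / ((p1 ⨯₃ u0) ⬝ᵥ (p1 ⨯₃ u0))]), ⟨hN', trivial⟩, ?_⟩
        simp only [hΦ, Matrix.cons_val_zero, Matrix.cons_val_one, Matrix.head_cons,
          Matrix.cons_val_two, Matrix.tail_cons]
        exact Prod.ext hr1 (Prod.ext hr2 rfl)
    rw [← himg]
    exact (pc_prod (pc_not_parallel u0 hu) ((convex_univ).isPathConnected ⟨0, trivial⟩)).image' hcont
end

section
/- (Cases 9 and 10: reduction of a general momentum value by a translation) Let α₀, u₀ ∈ ℝ³ with u₀ ≠ 0 and α₀×u₀ ≠ 0. Then there exist a unique vector a ∈ ℝ³ with ⟨a,u₀⟩ = 0 and a unique scalar δ ∈ ℝ such that a×u₀ + δu₀ = α₀; one has δ = 0 if and only if ⟨α₀,u₀⟩ = 0. Moreover (I,a)·J⁻¹(δu₀, u₀) = J⁻¹(α₀, u₀), i.e. (q¹,q²,p¹,p²) ∈ J⁻¹(α₀,u₀) if and only if (q¹−a, q²−a, p¹, p²) ∈ J⁻¹(δu₀, u₀); and also (I,a)·( J⁻¹(δu₀,u₀)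 ∩ M_{G⁴} ) = J⁻¹(α₀,u₀) ∩ M_{G⁴}. -/
open Matrix

lemma tripleL (x y z : V3) : (x ⨯₃ y) ⨯₃ z = (x ⬝ᵥ z) • y - (y ⬝ᵥ z) • x := by
  ext i
  fin_cases i <;>
    simp [cross_apply, dotProduct, Fin.sum_univ_three, Pi.smul_apply, smul_eq_mul] <;> ring

lemma cross_add_left' (x y z : V3) : (x + y) ⨯₃ z = x ⨯₃ z + y ⨯₃ z := by
  rw [map_add]; rfl

lemma cross_smul_left' (c : ℝ) (x z : V3) : (c • x) ⨯₃ z = c • (x ⨯₃ z) := by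
  rw [LinearMap.map_smul]; rfl

lemma cross_neg_left' (x z : V3) : (-x) ⨯₃ z = -(x ⨯₃ z) := by
  ext i
  fin_cases i <;> simp [cross_apply]

lemma cross_dot_right' (v w : V3) : (v ⨯₃ w) ⬝ᵥ w = 0 := by
  rw [dotProduct_comm]; exact dot_cross_self v w

lemma cross_dot_left' (v w : V3) : (v ⨯₃ w) ⬝ᵥ v = 0 := by
  rw [dotProduct_comm]; exact dot_self_cross v w

lemma Jact (c : V3) (m : M2B) :
    Jmom (act 1 c m) = ((Jmom m).1 + c ⨯₃ (Jmom m).2, (Jmom m).2) := by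
  obtain ⟨q1, q2, p1, p2⟩ := m
  simp only [Jmom, act, one_mulVec]
  refine Prod.ext ?_ rfl
  show (q1 + c) ⨯₃ p1 + (q2 + c) ⨯₃ p2 = q1 ⨯₃ p1 + q2 ⨯₃ p2 + c ⨯₃ (p1 + p2)
  rw [cross_add_left', cross_add_left', LinearMap.map_add]
  abel

lemma act_add' (c c' : V3) (m : M2B) : act 1 c (act 1 c' m) = act 1 (c' + c) m := by
  simp [act, one_mulVec, add_assoc]

lemma act_zero' (m : M2B) : act 1 0 m = m := by
  simp [act, one_mulVec]

lemma eqshift (x u b c q : V3) : x + u + b = q + c ↔ x + (u + b - c) = q := by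
  constructor <;> intro h
  · have e : x + (u + b - c) = x + u + b - c := by abel
    rw [e, h]; abel
  · have e : x + u + b = x + (u + b - c) + c := by abel
    rw [e, h]

lemma mem_iso_shift (A : Matrix (Fin 3) (Fin 3) ℝ) (b c : V3) (m : M2B) :
    (A, b) ∈ isotropy (act 1 c m) ↔ (A, A *ᵥ c + b - c) ∈ isotropy m := by
  obtain ⟨q1, q2, p1, p2⟩ := m
  simp only [isotropy, act, Set.mem_setOf_eq, one_mulVec, mulVec_add, Prod.mk.injEq]
  rw [eqshift, eqshift]

lemma iso_G4_of (c : V3) (m : M2B) (h : isotropy m = G4) :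
    isotropy (act 1 c m) = G4 := by
  ext g
  obtain ⟨A, b⟩ := g
  rw [mem_iso_shift]
  constructor
  · intro hmem
    rw [h] at hmem
    rw [G4, Set.mem_singleton_iff, Prod.mk.injEq] at hmem
    obtain ⟨hA1, hb⟩ := hmem
    subst hA1
    rw [one_mulVec] at hb
    have hb0 : b = 0 := by
      have e : c + b - c = b := by abel
      rw [e] at hb; exact hb
    rw [G4, Set.mem_singleton_iff, Prod.mk.injEq]
    exact ⟨rfl, hb0⟩
  · intro hmem
    rw [G4, Set.mem_singleton_iff, Prod.mk.injEq] at hmem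
    obtain ⟨hA1, hb⟩ := hmem
    subst hA1; subst hb
    rw [h]
    rw [G4, Set.mem_singleton_iff, Prod.mk.injEq]
    refine ⟨rfl, ?_⟩
    rw [one_mulVec]; abel

lemma iso_G4_iff (c : V3) (m : M2B) :
    isotropy (act 1 c m) = G4 ↔ isotropy m = G4 := by
  refine ⟨fun h => ?_, iso_G4_of c m⟩
  have h2 := iso_G4_of (-c) _ h
  rw [act_add'] at h2
  have e : c + -c = (0 : V3) := by abel
  rwa [e, act_zero'] at h2

/-- Cases 9 and 10: reduction of a general momentum value (α₀, u₀), α₀×u₀ ≠ 0,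
by a translation. -/
theorem stmt18 (a0 u0 : V3) (hu : u0 ≠ 0) (h : a0 ⨯₃ u0 ≠ 0) :
    (∃! ad : V3 × ℝ, ad.1 ⬝ᵥ u0 = 0 ∧ ad.1 ⨯₃ u0 + ad.2 • u0 = a0) ∧
    ∀ (a : V3) (d : ℝ), a ⬝ᵥ u0 = 0 → a ⨯₃ u0 + d • u0 = a0 →
      ((d = 0 ↔ a0 ⬝ᵥ u0 = 0) ∧
       act 1 a '' {m : M2B | Jmom m = (d • u0, u0)} =
         {m : M2B | Jmom m = (a0, u0)} ∧
       (∀ q1 q2 p1 p2 : V3, Jmom (q1, q2, p1, p2) = (a0, u0) ↔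
          Jmom (q1 - a, q2 - a, p1, p2) = (d • u0, u0)) ∧
       act 1 a '' {m : M2B | Jmom m = (d • u0, u0) ∧ isotropy m = G4} =
         {m : M2B | Jmom m = (a0, u0) ∧ isotropy m = G4}) := by
  have hn : u0 ⬝ᵥ u0 ≠ 0 := fun h0 => hu (dotProduct_self_eq_zero.mp h0)
  -- value of d forced by dotting with u0
  have hD : ∀ (a : V3) (d : ℝ), a ⨯₃ u0 + d • u0 = a0 → d * (u0 ⬝ᵥ u0) = a0 ⬝ᵥ u0 := by
    intro a d hsum
    have := congrArg (fun v => v ⬝ᵥ u0) hsum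
    simpa only [add_dotProduct, smul_dotProduct, cross_dot_right', zero_add,
      smul_eq_mul] using this
  -- value of a forced
  have hA : ∀ (a : V3) (d : ℝ), a ⬝ᵥ u0 = 0 → a ⨯₃ u0 + d • u0 = a0 →
      a = (u0 ⬝ᵥ u0)⁻¹ • (u0 ⨯₃ a0) := by
    intro a d ha hsum
    have e1 : (a ⨯₃ u0) ⨯₃ u0 = (a ⬝ᵥ u0) • u0 - (u0 ⬝ᵥ u0) • a := tripleL a u0 u0
    rw [ha, zero_smul, zero_sub] at e1
    have e2 : a ⨯₃ u0 = a0 - d • u0 := by rw [← hsum]; abel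
    rw [e2] at e1
    have e3 : (a0 - d • u0) ⨯₃ u0 = a0 ⨯₃ u0 := by
      have : a0 - d • u0 = a0 + (-d) • u0 := by
        rw [neg_smul]; abel
      rw [this, cross_add_left', cross_smul_left', cross_self, smul_zero, add_zero]
    rw [e3] at e1
    have e4 : (u0 ⬝ᵥ u0) • a = u0 ⨯₃ a0 := by
      rw [← cross_anticomm, e1, neg_neg]
    have := congrArg (fun v => (u0 ⬝ᵥ u0)⁻¹ • v) e4
    simpa only [smul_smul, inv_mul_cancel₀ hn, one_smul] using this
  constructor
  · -- existence and uniqueness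
    refine ⟨((u0 ⬝ᵥ u0)⁻¹ • (u0 ⨯₃ a0), (a0 ⬝ᵥ u0) / (u0 ⬝ᵥ u0)), ⟨?_, ?_⟩, ?_⟩
    · rw [smul_dotProduct, cross_dot_left', smul_zero]
    · rw [cross_smul_left', tripleL, smul_sub, smul_smul, smul_smul,
        inv_mul_cancel₀ hn, one_smul, div_eq_inv_mul, mul_comm]
      abel
    · rintro ⟨a, d⟩ ⟨h1, h2⟩
      have e1 := hA a d h1 h2
      have e2 := hD a d h2
      have e3 : d = (a0 ⬝ᵥ u0) / (u0 ⬝ᵥ u0) := (eq_div_iff hn).mpr e2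
      exact Prod.ext e1 e3
  · intro a d ha hsum
    have hd := hD a d hsum
    have hsum' : d • u0 + a ⨯₃ u0 = a0 := by rw [← hsum]; abel
    have hsum'' : a0 + (-a) ⨯₃ u0 = d • u0 := by
      rw [cross_neg_left', ← hsum]; abel
    refine ⟨?_, ?_, ?_, ?_⟩
    · constructor
      · intro h0; rw [← hd, h0, zero_mul]
      · intro h0
        rw [h0] at hd
        rcases mul_eq_zero.mp hd with h1 | h1
        · exact h1
        · exact absurd h1 hn
    · ext m
      simp only [Set.mem_image, Set.mem_setOf_eq]
      constructor
      · rintro ⟨x, hx, rfl⟩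
        rw [Jact, hx]
        show (d • u0 + a ⨯₃ u0, u0) = (a0, u0)
        rw [hsum']
      · intro hm
        refine ⟨act 1 (-a) m, ?_, ?_⟩
        · rw [Jact, hm]
          show (a0 + (-a) ⨯₃ u0, u0) = (d • u0, u0)
          rw [hsum'']
        · rw [act_add']
          have e : -a + a = (0 : V3) := by abel
          rw [e, act_zero']
    · intro q1 q2 p1 p2
      have e : ((q1 - a, q2 - a, p1, p2) : M2B) = act 1 (-a) (q1, q2, p1, p2) := by
        simp [act, one_mulVec, sub_eq_add_neg]
      rw [e, Jact]
      generalize Jmom (q1, q2, p1, p2) = J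
      obtain ⟨J1, J2⟩ := J
      simp only [Prod.mk.injEq]
      constructor
      · rintro ⟨h1, h2⟩
        rw [h1, h2]
        exact ⟨hsum'', rfl⟩
      · rintro ⟨h1, h2⟩
        refine ⟨?_, h2⟩
        rw [h2, cross_neg_left'] at h1
        have : J1 = d • u0 + a ⨯₃ u0 := by rw [← h1]; abel
        rw [this, hsum']
    · ext m
      simp only [Set.mem_image, Set.mem_setOf_eq]
      constructor
      · rintro ⟨x, ⟨hxJ, hxI⟩, rfl⟩
        refine ⟨?_, (iso_G4_iff a x).mpr hxI⟩
        rw [Jact, hxJ]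
        show (d • u0 + a ⨯₃ u0, u0) = (a0, u0)
        rw [hsum']
      · rintro ⟨hmJ, hmI⟩
        refine ⟨act 1 (-a) m, ⟨?_, (iso_G4_iff (-a) m).mpr hmI⟩, ?_⟩
        · rw [Jact, hmJ]
          show (a0 + (-a) ⨯₃ u0, u0) = (d • u0, u0)
          rw [hsum'']
        · rw [act_add']
          have e : -a + a = (0 : V3) := by abel
          rw [e, act_zero']
end
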